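/- Let n and d be natural numbers with n ≥ 100 and 2 ≤ d ≤ n. Then (d/(d-1))·n^{-1/d} + 1/d ≤ (n/(n-1))·n^{-1/n} + 1/n ≤ 1 - (ln n)/(2n), where n^{-1/d} and n^{-1/n} denote real powers and ln is the natural logarithm. -/

import Mathlib

open Real


lemma aux_log_ge {N : ℝ} (hN : 100 ≤ N) : 4.5 ≤ Real.log N := by
  rw [Real.le_log_iff_exp_le (by linarith)]
  have h1 : Real.exp 4.5 * Real.exp 4.5 = Real.exp 9 := by
    rw [← Real.exp_add]; norm_num
  have h2 : Real.exp 9 = Real.exp 1 ^ (9 : ℕ) := by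
    rw [← Real.exp_nat_mul]; norm_num
  have h3 : Real.exp 1 ^ (9 : ℕ) ≤ 2.7182818286 ^ (9 : ℕ) :=
    pow_le_pow_left₀ (Real.exp_pos 1).le Real.exp_one_lt_d9.le 9
  have h4 : (2.7182818286 : ℝ) ^ (9 : ℕ) < 10000 := by norm_num
  nlinarith [Real.exp_pos (4.5 : ℝ)]

lemma aux_log_le {N : ℝ} (hN : 100 ≤ N) : Real.log N ≤ N / 20 := by
  have he : Real.exp 1 ≤ 100 := by
    have := Real.exp_one_lt_d9; linarith
  have hmono := Real.log_div_self_antitoneOn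
    (Set.mem_setOf_eq ▸ (he.trans (by norm_num : (100:ℝ) ≤ 100)))
    (Set.mem_setOf_eq ▸ (he.trans hN)) hN
  have h5 : Real.log 100 < 5 := by
    rw [Real.log_lt_iff_lt_exp (by norm_num)]
    have h2 : Real.exp 5 = Real.exp 1 ^ (5 : ℕ) := by
      rw [← Real.exp_nat_mul]; norm_num
    have h3 : (2.7:ℝ) ^ (5:ℕ) ≤ Real.exp 1 ^ (5:ℕ) :=
      pow_le_pow_left₀ (by norm_num) (by have := Real.exp_one_gt_d9; linarith) 5
    have h4 : (100:ℝ) < 2.7 ^ (5:ℕ) := by norm_num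
    linarith
  have hN0 : (0:ℝ) < N := by linarith
  have : Real.log N / N ≤ Real.log 100 / 100 := hmono
  have : Real.log N / N ≤ 1/20 := by
    have : Real.log 100 / 100 ≤ 1/20 := by linarith
    linarith [hmono]
  calc Real.log N = (Real.log N / N) * N := by field_simp
    _ ≤ (1/20) * N := by apply mul_le_mul_of_nonneg_right this; linarith
    _ = N / 20 := by ring


lemma aux_step {N D : ℝ} (hN : 100 ≤ N) (hD : 2 ≤ D)
    (hcond : 1 ≤ (Real.log N - 2) * N ^ (-(1:ℝ)/D)) :
    D / (D - 1) * N ^ (-(1:ℝ)/D) + 1/D ≤ (D+1) / D * N ^ (-(1:ℝ)/(D+1)) + 1/(D+1) := by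
  have hN0 : (0:ℝ) < N := by linarith
  have hD0 : (0:ℝ) < D := by linarith
  have hD1 : (0:ℝ) < D - 1 := by linarith
  have hD2 : (0:ℝ) < D + 1 := by linarith
  set L := Real.log N with hL
  have hL45 : 4.5 ≤ L := aux_log_ge hN
  set a := N ^ (-(1:ℝ)/D) with ha
  set b := N ^ (-(1:ℝ)/(D+1)) with hb
  have ha0 : 0 < a := Real.rpow_pos_of_pos hN0 _
  have hb0 : 0 < b := Real.rpow_pos_of_pos hN0 _
  -- key: b ≥ a * (1 + L/(D*(D+1)))
  have hkey : a * (1 + L / (D * (D+1))) ≤ b := by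
    have hae : a = Real.exp (L * (-(1:ℝ)/D)) := by
      rw [ha, Real.rpow_def_of_pos hN0]
    have hbe : b = Real.exp (L * (-(1:ℝ)/(D+1))) := by
      rw [hb, Real.rpow_def_of_pos hN0]
    have hdiff : L * (-(1:ℝ)/(D+1)) - L * (-(1:ℝ)/D) = L / (D * (D+1)) := by
      field_simp; ring
    have hexp : 1 + L / (D * (D+1)) ≤ Real.exp (L / (D * (D+1))) := by
      have := Real.add_one_le_exp (L / (D * (D+1))); linarith
    calc a * (1 + L / (D * (D+1))) ≤ a * Real.exp (L / (D * (D+1))) := by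
          exact mul_le_mul_of_nonneg_left hexp ha0.le
      _ = b := by
          rw [hae, hbe, ← Real.exp_add, ← hdiff]; ring_nf
  have hkey' : a * (D * (D+1)) + a * L ≤ b * (D * (D+1)) := by
    have h := mul_le_mul_of_nonneg_right hkey (by positivity : (0:ℝ) ≤ D * (D+1))
    calc a * (D * (D+1)) + a * L = a * (1 + L / (D * (D+1))) * (D * (D+1)) := by
          field_simp
      _ ≤ b * (D * (D+1)) := h
  rw [← sub_nonneg]
  have heq : (D+1) / D * b + 1/(D+1) - (D / (D - 1) * a + 1/D)
      = (D*(D-1)*(D+1)^2*b - D^3*(D+1)*a + D^2*(D-1) - D*(D^2-1)) / (D^2*(D-1)*(D+1)) := by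
    field_simp
    ring
  rw [heq]
  apply div_nonneg _ (by positivity)
  have h1 : 0 ≤ (b * (D * (D+1)) - a * (D * (D+1)) - a * L) * ((D-1)*(D+1)) := by
    apply mul_nonneg (by linarith) (by nlinarith)
  have h2 : 0 ≤ ((L - 2) * a - 1) * (D^2 - 1) := by
    apply mul_nonneg (by linarith) (by nlinarith)
  have h3 : 0 ≤ a * ((D - 2) * (D+1)) := by
    apply mul_nonneg ha0.le (by nlinarith)
  nlinarith [h1, h2, h3]
lemma aux_chain (n : ℕ) (hn : 100 ≤ n) : ∀ k d : ℕ, 2 ≤ d → d + k = n →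
    1 ≤ (Real.log n - 2) * (n:ℝ) ^ (-(1:ℝ)/d) →
    (d:ℝ)/((d:ℝ)-1) * (n:ℝ) ^ (-(1:ℝ)/d) + 1/d ≤
      (n:ℝ)/((n:ℝ)-1) * (n:ℝ) ^ (-(1:ℝ)/n) + 1/n := by
  intro k
  induction k with
  | zero =>
    intro d _ hdn _
    have : d = n := by omega
    subst this
    exact le_refl _
  | succ k ih =>
    intro d hd2 hdn hcond
    have hN : (100:ℝ) ≤ (n:ℝ) := by exact_mod_cast hn
    have hD : (2:ℝ) ≤ (d:ℝ) := by exact_mod_cast hd2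
    have hstep := aux_step hN hD hcond
    have hcast : ((d+1 : ℕ):ℝ) = (d:ℝ) + 1 := by push_cast; ring
    have hnext :
        ((d+1:ℕ):ℝ)/(((d+1:ℕ):ℝ)-1) * (n:ℝ) ^ (-(1:ℝ)/((d+1:ℕ):ℝ)) + 1/((d+1:ℕ):ℝ) ≤
        (n:ℝ)/((n:ℝ)-1) * (n:ℝ) ^ (-(1:ℝ)/n) + 1/n := by
      apply ih (d+1) (by omega) (by omega)
      -- propagate condition
      have hmono : (n:ℝ) ^ (-(1:ℝ)/d) ≤ (n:ℝ) ^ (-(1:ℝ)/((d+1:ℕ):ℝ)) := by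
        apply Real.rpow_le_rpow_of_exponent_le (by linarith)
        rw [hcast]
        rw [div_le_div_iff₀ (by linarith) (by linarith)]
        nlinarith
      have hL : (0:ℝ) ≤ Real.log n - 2 := by
        have := aux_log_ge hN; linarith
      calc (1:ℝ) ≤ (Real.log n - 2) * (n:ℝ) ^ (-(1:ℝ)/d) := hcond
        _ ≤ (Real.log n - 2) * (n:ℝ) ^ (-(1:ℝ)/((d+1:ℕ):ℝ)) :=
            mul_le_mul_of_nonneg_left hmono hL
    refine le_trans ?_ hnext
    rw [hcast]
    simpa using hstep
lemma aux_exp_neg_le {t : ℝ} (ht : 0 ≤ t) : Real.exp (-t) ≤ 1 - t + t^2 := by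
  have h := Real.quadratic_le_exp_of_nonneg ht
  have hee : Real.exp (-t) * Real.exp t = 1 := by rw [← Real.exp_add]; simp
  have he0 : 0 < Real.exp (-t) := Real.exp_pos _
  nlinarith [mul_le_mul_of_nonneg_left h he0.le, sq_nonneg t,
    mul_nonneg (mul_nonneg ht ht) ht, mul_nonneg (mul_nonneg (mul_nonneg ht ht) ht) ht]

set_option maxHeartbeats 1000000 in
theorem sufficient_bound_lp (n d : ℕ) (hn : 100 ≤ n) (hd2 : 2 ≤ d) (hdn : d ≤ n) :
    (d : ℝ) / ((d : ℝ) - 1) * (n : ℝ) ^ (-(1 : ℝ) / d) + 1 / d ≤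
      (n : ℝ) / ((n : ℝ) - 1) * (n : ℝ) ^ (-(1 : ℝ) / n) + 1 / n ∧
    (n : ℝ) / ((n : ℝ) - 1) * (n : ℝ) ^ (-(1 : ℝ) / n) + 1 / n ≤
      1 - Real.log n / (2 * n) := by
  have hN : (100:ℝ) ≤ (n:ℝ) := by exact_mod_cast hn
  have hN0 : (0:ℝ) < (n:ℝ) := by linarith
  have hN1 : (1:ℝ) < (n:ℝ) := by linarith
  have hL45 : 4.5 ≤ Real.log n := aux_log_ge hN
  have hL20 : Real.log n ≤ (n:ℝ)/20 := aux_log_le hN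
  have hL0 : (0:ℝ) ≤ Real.log n := by linarith
  -- g n ≥ 0.95
  have hxdef : (n:ℝ) ^ (-(1:ℝ)/(n:ℝ)) = Real.exp (-(Real.log n / n)) := by
    rw [Real.rpow_def_of_pos hN0]; ring_nf
  have hx0 : (0:ℝ) < (n:ℝ) ^ (-(1:ℝ)/(n:ℝ)) := Real.rpow_pos_of_pos hN0 _
  have hLN : Real.log n / n ≤ 1/20 := by
    rw [div_le_iff₀ hN0]; linarith
  have hLN0 : 0 ≤ Real.log n / n := by positivity
  have hx95 : (0.95:ℝ) ≤ (n:ℝ) ^ (-(1:ℝ)/(n:ℝ)) := by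
    rw [hxdef]
    have := Real.add_one_le_exp (-(Real.log n / n))
    linarith
  have hgn : (0.95:ℝ) ≤ (n:ℝ)/((n:ℝ)-1) * (n:ℝ) ^ (-(1:ℝ)/(n:ℝ)) + 1/(n:ℝ) := by
    have h1 : (1:ℝ) ≤ (n:ℝ)/((n:ℝ)-1) := by
      rw [le_div_iff₀ (by linarith)]; linarith
    have h2 : (1:ℝ) * (0.95:ℝ) ≤ (n:ℝ)/((n:ℝ)-1) * ((n:ℝ) ^ (-(1:ℝ)/(n:ℝ))) :=
      mul_le_mul h1 hx95 (by norm_num) (le_trans zero_le_one h1)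
    have h3 : (0:ℝ) ≤ 1/(n:ℝ) := by positivity
    linarith
  constructor
  · by_cases hc : 1 ≤ (Real.log n - 2) * (n:ℝ) ^ (-(1:ℝ)/(d:ℝ))
    · exact aux_chain n hn (n - d) d hd2 (by omega) hc
    · push_neg at hc
      have ha0 : (0:ℝ) < (n:ℝ) ^ (-(1:ℝ)/(d:ℝ)) := Real.rpow_pos_of_pos hN0 _
      have ha25 : (n:ℝ) ^ (-(1:ℝ)/(d:ℝ)) ≤ 2/5 := by nlinarith
      rcases eq_or_lt_of_le hd2 with h2 | h3
      · -- d = 2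
        subst h2
        have h100 : (100:ℝ) ^ ((1:ℝ)/2) = 10 := by
          rw [show (100:ℝ) = 10 ^ (2:ℕ) by norm_num, ← Real.rpow_natCast 10 2,
            ← Real.rpow_mul (by norm_num)]
          norm_num
        have h10 : (10:ℝ) ≤ (n:ℝ) ^ ((1:ℝ)/2) := by
          rw [← h100]
          exact Real.rpow_le_rpow (by norm_num) hN (by norm_num)
        have ha : (n:ℝ) ^ (-(1:ℝ)/((2:ℕ):ℝ)) ≤ 1/10 := by
          have : (n:ℝ) ^ (-(1:ℝ)/((2:ℕ):ℝ)) = ((n:ℝ) ^ ((1:ℝ)/2))⁻¹ := by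
            rw [show -(1:ℝ)/((2:ℕ):ℝ) = -((1:ℝ)/2) by norm_num, Real.rpow_neg hN0.le]
          rw [this]
          rw [inv_le_comm₀ (by linarith) (by norm_num)]
          linarith
        have hb0 : (0:ℝ) < (n:ℝ) ^ (-(1:ℝ)/((2:ℕ):ℝ)) := Real.rpow_pos_of_pos hN0 _
        have : ((2:ℕ):ℝ) / (((2:ℕ):ℝ) - 1) * (n:ℝ) ^ (-(1:ℝ)/((2:ℕ):ℝ)) + 1/((2:ℕ):ℝ)
            ≤ 0.95 := by
          push_cast
          nlinarith
        linarith [hgn]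
      · -- d ≥ 3
        have hD3 : (3:ℝ) ≤ (d:ℝ) := by exact_mod_cast h3
        have hfrac : (d:ℝ)/((d:ℝ)-1) ≤ 3/2 := by
          rw [div_le_div_iff₀ (by linarith) (by norm_num)]
          linarith
        have hinv : 1/(d:ℝ) ≤ 1/3 := by
          rw [div_le_div_iff₀ (by linarith) (by norm_num)]
          linarith
        have : (d:ℝ)/((d:ℝ)-1) * (n:ℝ) ^ (-(1:ℝ)/(d:ℝ)) + 1/(d:ℝ) ≤ 0.95 := by
          have hf0 : (0:ℝ) ≤ (d:ℝ)/((d:ℝ)-1) := div_nonneg (by linarith) (by linarith)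
          nlinarith
        linarith [hgn]
  · -- second conjunct
    have hE : (n:ℝ) ^ (-(1:ℝ)/(n:ℝ)) ≤ 1 - Real.log n/(n:ℝ) + (Real.log n/(n:ℝ))^2 := by
      rw [hxdef]; exact aux_exp_neg_le hLN0
    obtain ⟨X, hX⟩ : ∃ X, (n:ℝ) ^ (-(1:ℝ)/(n:ℝ)) = X := ⟨_, rfl⟩
    obtain ⟨L, hLg⟩ : ∃ L, Real.log (n:ℝ) = L := ⟨_, rfl⟩
    rw [hX, hLg] at hE
    rw [hLg] at hL45 hL20 hL0
    have hX0 : (0:ℝ) < X := hX ▸ hx0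
    rw [hX, hLg]
    have hE2 : X * (n:ℝ)^2 ≤ (n:ℝ)^2 - L*(n:ℝ) + L^2 := by
      have h := mul_le_mul_of_nonneg_right hE (by positivity : (0:ℝ) ≤ (n:ℝ)^2)
      have heq : (1 - L/(n:ℝ) + (L/(n:ℝ))^2) * (n:ℝ)^2 = (n:ℝ)^2 - L*(n:ℝ) + L^2 := by
        field_simp
      linarith [heq ▸ h]
    have hne1 : (n:ℝ) ≠ 0 := by linarith
    have hne2 : (n:ℝ) - 1 ≠ 0 := by linarith
    rw [← sub_nonneg]
    have heq2 : 1 - L / (2*(n:ℝ)) - ((n:ℝ)/((n:ℝ)-1) * X + 1/(n:ℝ))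
        = (2*(n:ℝ)*((n:ℝ)-1) - L*((n:ℝ)-1) - 2*(n:ℝ)^2*X - 2*((n:ℝ)-1))
          / (2*(n:ℝ)*((n:ℝ)-1)) := by
      field_simp
      ring
    rw [heq2]
    apply div_nonneg _ (by nlinarith)
    nlinarith [hE2, mul_nonneg (by linarith : (0:ℝ) ≤ (n:ℝ)/20 - L) hL0,
      mul_nonneg (by linarith : (0:ℝ) ≤ L - 4.5) hN0.le]
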